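/- Let K ⊆ E be an admissible extension of differential fields (a tower K = K_0 ⊆ … ⊆ K_n = E where each step adjoins a special transcendental element). If a Rosenlicht type equation T(u, u', …, u^{(n-1)}) = 0 over K has a solution in E, then it has a solution in K. -/

import Mathlib

open Polynomial
set_option linter.unusedSectionVars false

namespace RosAux
variable {E : Type*} [Field E]

section D
variable (d : E → E)

/-- coefficientwise application of d -/
noncomputable def pd (p : E[X]) : E[X] := p.sum fun n a => C (d a) * X ^ n

variable (hdadd : ∀ a b, d (a + b) = d a + d b)
    (hdmul : ∀ a b, d (a * b) = d a * b + a * d b)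

include hdadd in
lemma d_zero : d 0 = 0 := by simpa using hdadd 0 0

include hdmul in
lemma d_one : d 1 = 0 := by simpa using hdmul 1 1

include hdadd hdmul in
lemma d_pow (x : E) (n : ℕ) : d (x ^ (n+1)) = (n+1) * x ^ n * d x := by
  induction n with
  | zero => simp
  | succ n ih =>
    have : x ^ (n+2) = x ^ (n+1) * x := by ring
    rw [this, hdmul, ih]
    push_cast
    ring

include hdadd in
lemma pd_coeff (p : E[X]) (k : ℕ) : (pd d p).coeff k = d (p.coeff k) := by
  unfold pd Polynomial.sum
  rw [finset_sum_coeff]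
  simp_rw [coeff_C_mul, coeff_X_pow, mul_ite, mul_one, mul_zero]
  rw [Finset.sum_ite_eq p.support k (fun n => d (p.coeff n))]
  split
  · rfl
  · rw [notMem_support_iff.mp (by assumption), d_zero d hdadd]

include hdadd in
lemma pd_add (p q : E[X]) : pd d (p + q) = pd d p + pd d q := by
  ext k
  simp [pd_coeff d hdadd, coeff_add, hdadd]

include hdadd in
lemma pd_monomial (n : ℕ) (a : E) : pd d (monomial n a) = monomial n (d a) := by
  ext k
  simp only [pd_coeff d hdadd, coeff_monomial]
  split
  · rfl
  · exact d_zero d hdadd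

include hdadd hdmul in
lemma d_eval (p : E[X]) (y : E) :
    d (p.eval y) = (pd d p).eval y + p.derivative.eval y * d y := by
  induction p using Polynomial.induction_on' with
  | add p q hp hq =>
    rw [eval_add, hdadd, hp, hq, pd_add d hdadd, derivative_add]
    simp only [eval_add]
    ring
  | monomial n a =>
    rw [pd_monomial d hdadd, derivative_monomial, eval_monomial, eval_monomial, eval_monomial]
    cases n with
    | zero => simp [hdmul, d_one d hdmul]
    | succ n =>
      rw [hdmul, d_pow d hdadd hdmul]
      simp
      ring

end D

section CL
variable (L : Subfield E)

/-- polynomials with coefficients in L -/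
def CL : Subring (Polynomial E) where
  carrier := {p | ∀ i, p.coeff i ∈ L}
  zero_mem' := by intro i; simp only [coeff_zero]; exact zero_mem L
  one_mem' := by
    intro i
    rw [coeff_one]
    split
    · exact one_mem L
    · exact zero_mem L
  add_mem' := by
    intro p q hp hq i
    rw [coeff_add]; exact add_mem (hp i) (hq i)
  neg_mem' := by
    intro p hp i
    rw [coeff_neg]; exact neg_mem (hp i)
  mul_mem' := by
    intro p q hp hq i
    rw [coeff_mul]
    exact Subfield.sum_mem L (fun c _ => mul_mem (hp c.1) (hq c.2))
    
lemma CL_C {L : Subfield E} {x : E} (hx : x ∈ L) : (C x : E[X]) ∈ CL L := by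
  intro i
  rw [coeff_C]
  split
  · exact hx
  · exact zero_mem L

lemma CL_X {L : Subfield E} : (X : E[X]) ∈ CL L := by
  intro i
  rw [coeff_X]
  split
  · exact one_mem L
  · exact zero_mem L

lemma CL_natCast {L : Subfield E} (n : ℕ) : ((n : E[X])) ∈ CL L :=
  natCast_mem (CL L) n

lemma CL_derivative {L : Subfield E} {p : E[X]} (hp : p ∈ CL L) : p.derivative ∈ CL L := by
  intro i
  rw [coeff_derivative]
  exact mul_mem (hp (i+1)) (by exact_mod_cast natCast_mem L (i+1))

lemma CL_pd {L : Subfield E} (d : E → E) (hdadd : ∀ a b, d (a + b) = d a + d b)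
    (hL : ∀ x ∈ L, d x ∈ L) {p : E[X]} (hp : p ∈ CL L) : pd d p ∈ CL L := by
  intro i
  rw [pd_coeff d hdadd]
  exact hL _ (hp i)

/-- transcendence: a polynomial with coefficients in `L` vanishing at `y` is zero -/
lemma CL_eval_eq_zero {L : Subfield E} {y : E} (hy : Transcendental (↥L) y)
    {p : E[X]} (hp : p ∈ CL L) (h0 : p.eval y = 0) : p = 0 := by
  by_contra hne
  set q : Polynomial ↥L := ∑ i ∈ p.support, C (⟨p.coeff i, hp i⟩ : ↥L) * X ^ i with hqdef
  have hmap : q.map (algebraMap ↥L E) = p := by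
    rw [hqdef, Polynomial.map_sum]
    simp_rw [Polynomial.map_mul, Polynomial.map_C, Polynomial.map_pow, Polynomial.map_X]
    have : ∀ i, algebraMap ↥L E ⟨p.coeff i, hp i⟩ = p.coeff i := fun i => rfl
    simp_rw [this, C_mul_X_pow_eq_monomial]
    exact (p.as_sum_support).symm
  have hqne : q ≠ 0 := by
    intro h
    apply hne
    rw [← hmap, h, Polynomial.map_zero]
  have : Polynomial.aeval y q = 0 := by
    rw [Polynomial.aeval_def, ← Polynomial.eval_map, hmap]
    exact h0
  exact hy ⟨q, hqne, this⟩

lemma CL_eval_ne_zero {L : Subfield E} {y : E} (hy : Transcendental (↥L) y)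
    {p : E[X]} (hp : p ∈ CL L) (h0 : p ≠ 0) : p.eval y ≠ 0 :=
  fun h => h0 (CL_eval_eq_zero hy hp h)

lemma CL_eval_zero_mem {L : Subfield E} {p : E[X]} (hp : p ∈ CL L) : p.eval 0 ∈ L := by
  rw [← coeff_zero_eq_eval_zero]
  exact hp 0

end CL
end RosAux

namespace RosAux
open Polynomial
variable {E : Type*} [Field E]

section DD
variable (d : E → E)

noncomputable def dnum (nn mm a b : E[X]) : E[X] :=
  (pd d a * mm + a.derivative * nn) * b - a * (pd d b * mm + b.derivative * nn)

noncomputable def dden (mm b : E[X]) : E[X] := b ^ 2 * mm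

variable (hdadd : ∀ a b, d (a + b) = d a + d b)
    (hdmul : ∀ a b, d (a * b) = d a * b + a * d b)

include hdadd hdmul in
lemma d_inv (b : E) (hb : b ≠ 0) : d b⁻¹ = -(d b) / b ^ 2 := by
  have h1 : b * b⁻¹ = 1 := mul_inv_cancel₀ hb
  have h2 := congrArg d h1
  rw [hdmul, d_one d hdmul] at h2
  rw [eq_div_iff (pow_ne_zero 2 hb)]
  linear_combination b * h2 + (-(d b)) * h1

include hdadd hdmul in
lemma d_div (a b : E) (hb : b ≠ 0) : d (a / b) = (d a * b - a * d b) / b ^ 2 := by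
  rw [div_eq_mul_inv, hdmul, d_inv d hdadd hdmul b hb]
  field_simp
  ring

include hdadd hdmul in
lemma dRep {y : E} {nn mm : E[X]} (hdy : d y * mm.eval y = nn.eval y)
    (a b : E[X]) (x : E) (hxy : x * b.eval y = a.eval y) :
    d x * (dden mm b).eval y = (dnum d nn mm a b).eval y := by
  have h1 := congrArg d hxy
  rw [hdmul, d_eval d hdadd hdmul b y, d_eval d hdadd hdmul a y] at h1
  simp only [dnum, dden, eval_mul, eval_add, eval_sub, eval_pow]
  linear_combination (mm.eval y * b.eval y) * h1 +
    (a.derivative.eval y * b.eval y - x * b.eval y * b.derivative.eval y) * hdy +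
    (-((pd d b).eval y * mm.eval y) - b.derivative.eval y * nn.eval y) * hxy

include hdadd hdmul in
lemma dEps {nn mm : E[X]} (hn0 : nn.eval 0 = 0) (hm0 : mm.eval 0 ≠ 0)
    (a b : E[X]) (hb0 : b.eval 0 ≠ 0) :
    (dnum d nn mm a b).eval 0 / (dden mm b).eval 0 = d (a.eval 0 / b.eval 0) := by
  have hpa : (pd d a).eval 0 = d (a.eval 0) := by
    rw [← coeff_zero_eq_eval_zero, ← coeff_zero_eq_eval_zero, pd_coeff d hdadd]
  have hpb : (pd d b).eval 0 = d (b.eval 0) := by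
    rw [← coeff_zero_eq_eval_zero, ← coeff_zero_eq_eval_zero, pd_coeff d hdadd]
  rw [d_div d hdadd hdmul _ _ hb0]
  simp only [dnum, dden, eval_mul, eval_add, eval_sub, eval_pow, hn0, hpa, hpb]
  field_simp
  ring

include hdadd in
lemma CL_dnum {L : Subfield E} (hL : ∀ x ∈ L, d x ∈ L) {nn mm a b : E[X]}
    (hnn : nn ∈ CL L) (hmm : mm ∈ CL L) (ha : a ∈ CL L) (hb : b ∈ CL L) :
    dnum d nn mm a b ∈ CL L := by
  unfold dnum
  exact sub_mem (mul_mem (add_mem (mul_mem (CL_pd d hdadd hL ha) hmm)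
    (mul_mem (CL_derivative ha) hnn)) hb)
    (mul_mem ha (add_mem (mul_mem (CL_pd d hdadd hL hb) hmm)
      (mul_mem (CL_derivative hb) hnn)))

lemma CL_dden {L : Subfield E} {mm b : E[X]} (hmm : mm ∈ CL L) (hb : b ∈ CL L) :
    dden mm b ∈ CL L := mul_mem (pow_mem hb 2) hmm

lemma dden_eval_zero_ne {mm b : E[X]} (hm0 : mm.eval 0 ≠ 0) (hb0 : b.eval 0 ≠ 0) :
    (dden mm b).eval 0 ≠ 0 := by
  simp only [dden, eval_mul, eval_pow]
  exact mul_ne_zero (pow_ne_zero _ hb0) hm0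

end DD
end RosAux

namespace RosAux
open Polynomial
variable {E : Type*} [Field E]

section Seq
variable (d : E → E)

noncomputable def dnumW (nn1 mm : E[X]) (c : E) (a b : E[X]) : E[X] :=
  dnum d (X * nn1) mm a b * mm - C c * nn1 * a * b * mm

noncomputable def ddenW (mm b : E[X]) : E[X] := dden mm b * mm

noncomputable def seqO (nn mm : E[X]) (ab : E[X] × E[X]) : ℕ → E[X] × E[X]
  | 0 => ab
  | j+1 => (dnum d nn mm (seqO nn mm ab j).1 (seqO nn mm ab j).2,
            dden mm (seqO nn mm ab j).2)

noncomputable def seqW (nn1 mm : E[X]) (c : E) (ab : E[X] × E[X]) : ℕ → E[X] × E[X]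
  | 0 => ab
  | j+1 => (dnumW d nn1 mm c (seqW nn1 mm c ab j).1 (seqW nn1 mm c ab j).2,
            ddenW mm (seqW nn1 mm c ab j).2)

variable (hdadd : ∀ a b, d (a + b) = d a + d b)
    (hdmul : ∀ a b, d (a * b) = d a * b + a * d b)

include hdadd hdmul in
lemma dRepW {y : E} {nn1 mm : E[X]} (hdy : d y * mm.eval y = y * nn1.eval y) (k' : ℕ)
    (A B : E[X]) (x : E) (hrep : (y ^ (k'+1) * x) * B.eval y = A.eval y) :
    (y ^ (k'+1) * d x) * (ddenW mm B).eval y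
      = (dnumW d nn1 mm ((k'+1 : ℕ) : E) A B).eval y := by
  have hdy' : d y * mm.eval y = (X * nn1).eval y := by
    rw [eval_mul, eval_X]; exact hdy
  have h1 := dRep d hdadd hdmul hdy' A B (y ^ (k'+1) * x) hrep
  rw [hdmul, d_pow d hdadd hdmul] at h1
  simp only [dnumW, ddenW, dnum, dden, eval_mul, eval_add, eval_sub, eval_pow, eval_X,
    eval_C] at h1 ⊢
  push_cast at h1 ⊢
  linear_combination mm.eval y * h1 +
    (-(((k' : E) + 1) * y ^ k' * x * (B.eval y ^ 2 * mm.eval y))) * hdy +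
    (-(((k' : E) + 1) * nn1.eval y * B.eval y * mm.eval y)) * hrep

variable {L : Subfield E} (hL : ∀ x ∈ L, d x ∈ L) {y : E}
  (hy : Transcendental (↥L) y)
  {nn1 mm : E[X]} (hnn1 : nn1 ∈ CL L) (hmm : mm ∈ CL L) (hm0 : mm.eval 0 ≠ 0)
  (hdy : d y * mm.eval y = y * nn1.eval y)

include hdadd hdmul hL hnn1 hmm hm0 hdy in
lemma seqO_spec (a0 b0 : E[X]) (ha0 : a0 ∈ CL L) (hb0 : b0 ∈ CL L)
    (hb00 : b0.eval 0 ≠ 0) (u : E) (hrep : u * b0.eval y = a0.eval y) (j : ℕ) :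
    (seqO d (X * nn1) mm (a0, b0) j).1 ∈ CL L ∧
    (seqO d (X * nn1) mm (a0, b0) j).2 ∈ CL L ∧
    (seqO d (X * nn1) mm (a0, b0) j).2.eval 0 ≠ 0 ∧
    d^[j] u * (seqO d (X * nn1) mm (a0, b0) j).2.eval y
      = (seqO d (X * nn1) mm (a0, b0) j).1.eval y ∧
    d^[j] (a0.eval 0 / b0.eval 0)
      = (seqO d (X * nn1) mm (a0, b0) j).1.eval 0 /
        (seqO d (X * nn1) mm (a0, b0) j).2.eval 0 := by
  have hnn : (X * nn1 : E[X]) ∈ CL L := mul_mem CL_X hnn1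
  have hn0 : (X * nn1 : E[X]).eval 0 = 0 := by simp
  have hdy' : d y * mm.eval y = (X * nn1 : E[X]).eval y := by
    rw [eval_mul, eval_X]; exact hdy
  induction j with
  | zero => exact ⟨ha0, hb0, hb00, hrep, rfl⟩
  | succ j ih =>
    obtain ⟨hA, hB, hB0, hR, hE⟩ := ih
    refine ⟨CL_dnum d hdadd hL hnn hmm hA hB, CL_dden hmm hB,
      dden_eval_zero_ne hm0 hB0, ?_, ?_⟩
    · rw [Function.iterate_succ_apply']
      exact dRep d hdadd hdmul hdy' _ _ _ hR
    · rw [Function.iterate_succ_apply', hE]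
      exact (dEps d hdadd hdmul hn0 hm0 _ _ hB0).symm

include hdadd hdmul hL hnn1 hmm hm0 hdy in
lemma seqW_spec (k' : ℕ) (a0 b0 : E[X]) (ha0 : a0 ∈ CL L) (hb0 : b0 ∈ CL L)
    (hb00 : b0.eval 0 ≠ 0) (u : E)
    (hrep : (y ^ (k'+1) * u) * b0.eval y = a0.eval y) (j : ℕ) :
    (seqW d nn1 mm ((k'+1 : ℕ) : E) (a0, b0) j).1 ∈ CL L ∧
    (seqW d nn1 mm ((k'+1 : ℕ) : E) (a0, b0) j).2 ∈ CL L ∧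
    (seqW d nn1 mm ((k'+1 : ℕ) : E) (a0, b0) j).2.eval 0 ≠ 0 ∧
    (y ^ (k'+1) * d^[j] u) * (seqW d nn1 mm ((k'+1 : ℕ) : E) (a0, b0) j).2.eval y
      = (seqW d nn1 mm ((k'+1 : ℕ) : E) (a0, b0) j).1.eval y := by
  have hnn : (X * nn1 : E[X]) ∈ CL L := mul_mem CL_X hnn1
  induction j with
  | zero => exact ⟨ha0, hb0, hb00, hrep⟩
  | succ j ih =>
    obtain ⟨hA, hB, hB0, hR⟩ := ih
    refine ⟨?_, ?_, ?_, ?_⟩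
    · exact sub_mem (mul_mem (CL_dnum d hdadd hL hnn hmm hA hB) hmm)
        (mul_mem (mul_mem (mul_mem (mul_mem
          (CL_C (by exact_mod_cast natCast_mem L (k'+1))) hnn1) hA) hB) hmm)
    · exact mul_mem (CL_dden hmm hB) hmm
    · show (ddenW mm _).eval 0 ≠ 0
      unfold ddenW
      rw [eval_mul]
      exact mul_ne_zero (dden_eval_zero_ne hm0 hB0) hm0
    · rw [Function.iterate_succ_apply']
      exact dRepW d hdadd hdmul hdy k' _ _ _ hR

end Seq

section SumDiv
variable {L : Subfield E}

lemma sum_div {ι : Type*} (S : Finset ι) (g : ι → E → E) (P Q : ι → E[X])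
    (hP : ∀ c ∈ S, P c ∈ CL L) (hQ : ∀ c ∈ S, Q c ∈ CL L) :
    ∃ A B : E[X], A ∈ CL L ∧ B ∈ CL L ∧ ∀ t : E,
      (∀ c ∈ S, (Q c).eval t ≠ 0 ∧ g c t * (Q c).eval t = (P c).eval t) →
      B.eval t ≠ 0 ∧ (∑ c ∈ S, g c t) * B.eval t = A.eval t := by
  classical
  induction S using Finset.induction_on with
  | empty =>
    exact ⟨0, 1, zero_mem _, one_mem _, fun t _ => by simp⟩
  | insert a S hna ih =>
    obtain ⟨A, B, hA, hB, h⟩ := ih (fun c hc => hP c (Finset.mem_insert_of_mem hc))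
      (fun c hc => hQ c (Finset.mem_insert_of_mem hc))
    refine ⟨P a * B + A * Q a, Q a * B,
      add_mem (mul_mem (hP a (Finset.mem_insert_self a S)) hB)
        (mul_mem hA (hQ a (Finset.mem_insert_self a S))),
      mul_mem (hQ a (Finset.mem_insert_self a S)) hB, fun t ht => ?_⟩
    obtain ⟨hBt, hsum⟩ := h t (fun c hc => ht c (Finset.mem_insert_of_mem hc))
    obtain ⟨hQa, hga⟩ := ht a (Finset.mem_insert_self a S)
    constructor
    · rw [eval_mul]; exact mul_ne_zero hQa hBt
    · rw [Finset.sum_insert hna]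
      simp only [eval_add, eval_mul]
      linear_combination B.eval t * hga + (Q a).eval t * hsum

lemma mono_rep (c : ℕ →₀ ℕ) (r : ℕ) (co : E) (Aj Bj : ℕ → E[X]) (t : E)
    (hB : ∀ j ∈ c.support, (Bj j).eval t ≠ 0) :
    ((∏ j ∈ c.support, Bj j ^ c j).eval t ≠ 0) ∧
    (co * t ^ r * ∏ j ∈ c.support, ((Aj j).eval t / (Bj j).eval t) ^ c j) *
       (∏ j ∈ c.support, Bj j ^ c j).eval t
     = (C co * X ^ r * ∏ j ∈ c.support, Aj j ^ c j).eval t := by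
  have hprod : (∏ j ∈ c.support, Bj j ^ c j).eval t
      = ∏ j ∈ c.support, ((Bj j).eval t) ^ c j := by
    rw [eval_prod]; exact Finset.prod_congr rfl (fun j _ => by rw [eval_pow])
  constructor
  · rw [hprod]
    exact Finset.prod_ne_zero_iff.mpr (fun j hj => pow_ne_zero _ (hB j hj))
  · rw [hprod]
    simp only [eval_mul, eval_C, eval_pow, eval_X, eval_prod]
    rw [mul_assoc, ← Finset.prod_mul_distrib]
    congr 1
    refine Finset.prod_congr rfl (fun j hj => ?_)
    rw [div_pow, div_mul_cancel₀]
    exact pow_ne_zero _ (hB j hj)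

end SumDiv
end RosAux

namespace RosAux
open Polynomial
variable {E : Type*} [Field E]

lemma step (d : E → E) (hdadd : ∀ a b, d (a + b) = d a + d b)
    (hdmul : ∀ a b, d (a * b) = d a * b + a * d b)
    (L : Subfield E) (hL : ∀ x ∈ L, d x ∈ L)
    (y : E) (hy : Transcendental (↥L) y)
    (nn1 mm : E[X]) (hnn1 : nn1 ∈ CL L) (hmm : mm ∈ CL L)
    (hm0 : mm.eval 0 ≠ 0)
    (hdy : d y * mm.eval y = y * nn1.eval y)
    (K0 : Subfield E) (hK0 : K0 ≤ L)
    (N : ℕ) (hN : N ≠ 0) (T : MvPolynomial ℕ ↥K0)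
    (hdeg : T.totalDegree ≤ N)
    (hhom : MvPolynomial.homogeneousComponent N T = MvPolynomial.X 0 ^ N)
    (u : E) (a0 b0 : E[X]) (ha0 : a0 ∈ CL L) (hb0 : b0 ∈ CL L)
    (hb0y : b0.eval y ≠ 0) (hrep : u * b0.eval y = a0.eval y)
    (hsolu : MvPolynomial.aeval (fun j => d^[j] u) T = 0) :
    ∃ v : E, v ∈ L ∧ MvPolynomial.aeval (fun j => d^[j] v) T = 0 := by
  classical
  have hy0 : y ≠ 0 := by
    intro h
    exact hy ⟨X, X_ne_zero, by simp [h]⟩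
  have evalyne : ∀ p : E[X], p ∈ CL L → p.eval 0 ≠ 0 → p.eval y ≠ 0 := by
    intro p hp h0
    exact CL_eval_ne_zero hy hp (fun hq => h0 (by rw [hq, eval_zero]))
  by_cases hu : u = 0
  · refine ⟨0, zero_mem L, ?_⟩
    rw [show (fun j => d^[j] (0:E)) = (fun j => d^[j] u) from by rw [hu]]
    exact hsolu
  have ha0ne : a0 ≠ 0 := by
    intro h
    rw [h, eval_zero] at hrep
    rcases mul_eq_zero.mp hrep with h' | h'
    · exact hu h'
    · exact hb0y h'
  have hb0ne : b0 ≠ 0 := fun h => hb0y (by rw [h, eval_zero])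
  -- factor out powers of X
  set α := a0.rootMultiplicity 0 with hα
  set β := b0.rootMultiplicity 0 with hβ
  obtain ⟨a1, ha1eq, ha1ne⟩ :
      ∃ a1 : E[X], a0 = X ^ α * a1 ∧ a1.eval 0 ≠ 0 := by
    refine ⟨a0 /ₘ X ^ α, ?_, ?_⟩
    · have := a0.pow_mul_divByMonic_rootMultiplicity_eq 0
      simp only [C_0, sub_zero] at this
      exact this.symm
    · have := eval_divByMonic_pow_rootMultiplicity_ne_zero 0 ha0ne
      simpa using this
  obtain ⟨b1, hb1eq, hb1ne⟩ :
      ∃ b1 : E[X], b0 = X ^ β * b1 ∧ b1.eval 0 ≠ 0 := by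
    refine ⟨b0 /ₘ X ^ β, ?_, ?_⟩
    · have := b0.pow_mul_divByMonic_rootMultiplicity_eq 0
      simp only [C_0, sub_zero] at this
      exact this.symm
    · have := eval_divByMonic_pow_rootMultiplicity_ne_zero 0 hb0ne
      simpa using this
  have hCLa1 : a1 ∈ CL L := by
    intro i
    have : a0.coeff (i + α) = a1.coeff i := by rw [ha1eq, coeff_X_pow_mul]
    rw [← this]; exact ha0 _
  have hCLb1 : b1 ∈ CL L := by
    intro i
    have : b0.coeff (i + β) = b1.coeff i := by rw [hb1eq, coeff_X_pow_mul]
    rw [← this]; exact hb0 _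
  have hb1y : b1.eval y ≠ 0 := evalyne b1 hCLb1 hb1ne
  have hrepy : u * (y ^ β * b1.eval y) = y ^ α * a1.eval y := by
    have h := hrep
    rw [ha1eq, hb1eq, eval_mul, eval_mul, eval_pow, eval_pow, eval_X] at h
    exact h
  rcases le_or_gt β α with hcase | hcase
  · -- no pole at 0 : descend directly
    set a2 : E[X] := X ^ (α - β) * a1 with ha2
    have hCLa2 : a2 ∈ CL L := mul_mem (pow_mem CL_X _) hCLa1
    have hpow : y ^ β * y ^ (α - β) = y ^ α := by
      rw [← pow_add]; congr 1; omega
    have hstep0 : u * b1.eval y = a2.eval y := by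
      apply mul_left_cancel₀ (pow_ne_zero β hy0)
      rw [ha2, eval_mul, eval_pow, eval_X]
      linear_combination hrepy - a1.eval y * hpow
    have spec := fun j => seqO_spec d hdadd hdmul hL hnn1 hmm hm0 hdy
      a2 b1 hCLa2 hCLb1 hb1ne u hstep0 j
    set Aj : ℕ → E[X] := fun j => (seqO d (X * nn1) mm (a2, b1) j).1 with hAj
    set Bj : ℕ → E[X] := fun j => (seqO d (X * nn1) mm (a2, b1) j).2 with hBj
    set v : E := a2.eval 0 / b1.eval 0 with hv
    have hvL : v ∈ L := div_mem (CL_eval_zero_mem hCLa2) (CL_eval_zero_mem hCLb1)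
    obtain ⟨A, B, hA, hB, hAB⟩ := sum_div (L := L) T.support
      (fun c t => (algebraMap ↥K0 E (MvPolynomial.coeff c T)) * t ^ 0 *
        ∏ j ∈ c.support, ((Aj j).eval t / (Bj j).eval t) ^ c j)
      (fun c => C (algebraMap ↥K0 E (MvPolynomial.coeff c T)) * X ^ 0 *
        ∏ j ∈ c.support, Aj j ^ c j)
      (fun c => ∏ j ∈ c.support, Bj j ^ c j)
      (fun c _ => mul_mem (mul_mem (CL_C (hK0 (SetLike.coe_mem _))) (pow_mem CL_X _))
        (prod_mem (fun j _ => pow_mem (spec j).1 _)))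
      (fun c _ => prod_mem (fun j _ => pow_mem (spec j).2.1 _))
    have hBjy : ∀ j, (Bj j).eval y ≠ 0 :=
      fun j => evalyne _ (spec j).2.1 (spec j).2.2.1
    have hty := hAB y (fun c _ => mono_rep c 0 _ Aj Bj y (fun j _ => hBjy j))
    have ht0 := hAB 0 (fun c _ => mono_rep c 0 _ Aj Bj 0 (fun j _ => (spec j).2.2.1))
    have hsumy : (∑ c ∈ T.support,
        (algebraMap ↥K0 E (MvPolynomial.coeff c T)) * y ^ 0 *
          ∏ j ∈ c.support, ((Aj j).eval y / (Bj j).eval y) ^ c j) = 0 := by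
      rw [← hsolu, MvPolynomial.aeval_def, MvPolynomial.eval₂_eq]
      refine Finset.sum_congr rfl (fun c _ => ?_)
      rw [pow_zero, mul_one]
      congr 1
      refine Finset.prod_congr rfl (fun j _ => ?_)
      congr 1
      rw [div_eq_iff (hBjy j)]
      exact ((spec j).2.2.2.1).symm
    have hAy : A.eval y = 0 := by
      have := hty.2
      rw [hsumy, zero_mul] at this
      exact this.symm
    have hA0' : A = 0 := CL_eval_eq_zero hy hA hAy
    refine ⟨v, hvL, ?_⟩
    have hsum0 := ht0.2
    rw [hA0', eval_zero] at hsum0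
    have hsum0' : (∑ c ∈ T.support,
        (algebraMap ↥K0 E (MvPolynomial.coeff c T)) * (0:E) ^ 0 *
          ∏ j ∈ c.support, ((Aj j).eval 0 / (Bj j).eval 0) ^ c j) = 0 :=
      (mul_eq_zero.mp hsum0).resolve_right ht0.1
    rw [MvPolynomial.aeval_def, MvPolynomial.eval₂_eq, ← hsum0']
    refine Finset.sum_congr rfl (fun c _ => ?_)
    rw [pow_zero, mul_one]
    congr 1
    refine Finset.prod_congr rfl (fun j _ => ?_)
    congr 1
    exact (spec j).2.2.2.2
  · -- pole at 0 : contradiction with the Rosenlicht shape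
    exfalso
    set k' := β - α - 1 with hk'
    have hpow2 : y ^ α * y ^ (k'+1) = y ^ β := by
      rw [← pow_add]; congr 1; omega
    have hstep0 : (y ^ (k'+1) * u) * b1.eval y = a1.eval y := by
      apply mul_left_cancel₀ (pow_ne_zero α hy0)
      linear_combination hrepy + u * b1.eval y * hpow2
    have spec := fun j => seqW_spec d hdadd hdmul hL hnn1 hmm hm0 hdy k'
      a1 b1 hCLa1 hCLb1 hb1ne u hstep0 j
    set Aj : ℕ → E[X] := fun j => (seqW d nn1 mm ((k'+1 : ℕ) : E) (a1, b1) j).1 with hAj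
    set Bj : ℕ → E[X] := fun j => (seqW d nn1 mm ((k'+1 : ℕ) : E) (a1, b1) j).2 with hBj
    obtain ⟨A, B, hA, hB, hAB⟩ := sum_div (L := L) T.support
      (fun c t => (algebraMap ↥K0 E (MvPolynomial.coeff c T)) *
          t ^ ((k'+1) * (N - c.degree)) *
        ∏ j ∈ c.support, ((Aj j).eval t / (Bj j).eval t) ^ c j)
      (fun c => C (algebraMap ↥K0 E (MvPolynomial.coeff c T)) *
          X ^ ((k'+1) * (N - c.degree)) *
        ∏ j ∈ c.support, Aj j ^ c j)
      (fun c => ∏ j ∈ c.support, Bj j ^ c j)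
      (fun c _ => mul_mem (mul_mem (CL_C (hK0 (SetLike.coe_mem _))) (pow_mem CL_X _))
        (prod_mem (fun j _ => pow_mem (spec j).1 _)))
      (fun c _ => prod_mem (fun j _ => pow_mem (spec j).2.1 _))
    have hBjy : ∀ j, (Bj j).eval y ≠ 0 :=
      fun j => evalyne _ (spec j).2.1 (spec j).2.2.1
    have hty := hAB y (fun c _ => mono_rep c _ _ Aj Bj y (fun j _ => hBjy j))
    have ht0 := hAB 0 (fun c _ => mono_rep c _ _ Aj Bj 0 (fun j _ => (spec j).2.2.1))
    have hsumy : (∑ c ∈ T.support, (algebraMap ↥K0 E (MvPolynomial.coeff c T)) *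
          y ^ ((k'+1) * (N - c.degree)) *
          ∏ j ∈ c.support, ((Aj j).eval y / (Bj j).eval y) ^ c j) = 0 := by
      have hterm : ∀ c ∈ T.support, (algebraMap ↥K0 E (MvPolynomial.coeff c T)) *
          y ^ ((k'+1) * (N - c.degree)) *
          ∏ j ∈ c.support, ((Aj j).eval y / (Bj j).eval y) ^ c j
          = y ^ ((k'+1) * N) * ((algebraMap ↥K0 E (MvPolynomial.coeff c T)) *
            ∏ j ∈ c.support, (d^[j] u) ^ c j) := by
        intro c hc
        have hprod : ∏ j ∈ c.support, ((Aj j).eval y / (Bj j).eval y) ^ c j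
            = ∏ j ∈ c.support, (y ^ (k'+1) * d^[j] u) ^ c j := by
          refine Finset.prod_congr rfl (fun j _ => ?_)
          congr 1
          rw [div_eq_iff (hBjy j)]
          exact ((spec j).2.2.2).symm
        have he : c.degree ≤ N := le_trans (MvPolynomial.le_totalDegree hc) hdeg
        rw [hprod]
        simp_rw [mul_pow]
        rw [Finset.prod_mul_distrib, Finset.prod_pow_eq_pow_sum, ← pow_mul]
        have hsum : (∑ j ∈ c.support, c j) = c.degree := rfl
        have hyy : y ^ ((k'+1) * (N - c.degree)) * y ^ ((k'+1) * c.degree)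
            = y ^ ((k'+1) * N) := by
          rw [← pow_add, ← Nat.left_distrib]
          congr 2
          omega
        rw [hsum]
        linear_combination (algebraMap ↥K0 E (MvPolynomial.coeff c T) *
          ∏ j ∈ c.support, (d^[j] u) ^ c j) * hyy
      rw [Finset.sum_congr rfl hterm, ← Finset.mul_sum]
      have : (∑ c ∈ T.support, (algebraMap ↥K0 E (MvPolynomial.coeff c T)) *
          ∏ j ∈ c.support, (d^[j] u) ^ c j) = 0 := by
        rw [← hsolu, MvPolynomial.aeval_def, MvPolynomial.eval₂_eq]
      rw [this, mul_zero]
    have hAy : A.eval y = 0 := by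
      have := hty.2
      rw [hsumy, zero_mul] at this
      exact this.symm
    have hA0' : A = 0 := CL_eval_eq_zero hy hA hAy
    have hsum0 := ht0.2
    rw [hA0', eval_zero] at hsum0
    have hsum0' : (∑ c ∈ T.support, (algebraMap ↥K0 E (MvPolynomial.coeff c T)) *
          (0:E) ^ ((k'+1) * (N - c.degree)) *
          ∏ j ∈ c.support, ((Aj j).eval 0 / (Bj j).eval 0) ^ c j) = 0 :=
      (mul_eq_zero.mp hsum0).resolve_right ht0.1
    -- but the sum at 0 equals (a1(0)/b1(0))^N ≠ 0
    have hdegsingle : (Finsupp.single (0:ℕ) N).degree = N := by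
      exact Finsupp.degree_single 0 N
    have hcoeffsingle : MvPolynomial.coeff (Finsupp.single 0 N) T = 1 := by
      have hc := congrArg (MvPolynomial.coeff (Finsupp.single 0 N)) hhom
      rw [MvPolynomial.coeff_homogeneousComponent, MvPolynomial.coeff_X_pow] at hc
      simp only [hdegsingle, if_pos rfl] at hc
      exact hc
    have hmemsingle : Finsupp.single (0:ℕ) N ∈ T.support := by
      rw [MvPolynomial.mem_support_iff, hcoeffsingle]
      exact one_ne_zero
    have hsingleval : (algebraMap ↥K0 E (MvPolynomial.coeff (Finsupp.single 0 N) T)) *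
          (0:E) ^ ((k'+1) * (N - (Finsupp.single (0:ℕ) N).degree)) *
          ∏ j ∈ (Finsupp.single (0:ℕ) N).support,
            ((Aj j).eval 0 / (Bj j).eval 0) ^ (Finsupp.single (0:ℕ) N) j
        = (a1.eval 0 / b1.eval 0) ^ N := by
      rw [hcoeffsingle, map_one, hdegsingle, Nat.sub_self, Nat.mul_zero, pow_zero,
        Finsupp.support_single_ne_zero 0 hN, Finset.prod_singleton, Finsupp.single_eq_same]
      simp only [one_mul]
      rfl
    have hothers : ∀ c ∈ T.support, c ≠ Finsupp.single 0 N →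
        (algebraMap ↥K0 E (MvPolynomial.coeff c T)) *
          (0:E) ^ ((k'+1) * (N - c.degree)) *
          ∏ j ∈ c.support, ((Aj j).eval 0 / (Bj j).eval 0) ^ c j = 0 := by
      intro c hc hne
      have he : c.degree ≤ N := le_trans (MvPolynomial.le_totalDegree hc) hdeg
      rcases eq_or_lt_of_le he with heq | hlt
      · exfalso
        have hc2 := congrArg (MvPolynomial.coeff c) hhom
        rw [MvPolynomial.coeff_homogeneousComponent, MvPolynomial.coeff_X_pow] at hc2
        rw [if_pos heq, if_neg (fun h => hne h.symm)] at hc2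
        exact (MvPolynomial.mem_support_iff.mp hc) hc2
      · rw [zero_pow (Nat.mul_ne_zero (Nat.succ_ne_zero k') (by omega))]
        ring
    have hsum0'' : (∑ c ∈ T.support, (algebraMap ↥K0 E (MvPolynomial.coeff c T)) *
          (0:E) ^ ((k'+1) * (N - c.degree)) *
          ∏ j ∈ c.support, ((Aj j).eval 0 / (Bj j).eval 0) ^ c j)
        = (a1.eval 0 / b1.eval 0) ^ N := by
      rw [Finset.sum_eq_single_of_mem _ hmemsingle hothers]
      exact hsingleval
    rw [hsum0''] at hsum0'
    exact pow_ne_zero N (div_ne_zero ha1ne hb1ne) hsum0'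

end RosAux

namespace RosAux
open Polynomial
variable {E : Type*} [Field E]

def Fsub (L : Subfield E) (y : E) : Subfield E where
  carrier := {x | ∃ a b : E[X], a ∈ CL L ∧ b ∈ CL L ∧ b.eval y ≠ 0 ∧
    x * b.eval y = a.eval y}
  zero_mem' := ⟨0, 1, zero_mem _, one_mem _, by simp, by simp⟩
  one_mem' := ⟨1, 1, one_mem _, one_mem _, by simp, by simp⟩
  add_mem' := by
    rintro x1 x2 ⟨a1,b1,ha1,hb1,hb1y,h1⟩ ⟨a2,b2,ha2,hb2,hb2y,h2⟩
    exact ⟨a1*b2 + a2*b1, b1*b2, add_mem (mul_mem ha1 hb2) (mul_mem ha2 hb1),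
      mul_mem hb1 hb2, by rw [eval_mul]; exact mul_ne_zero hb1y hb2y,
      by simp only [eval_add, eval_mul]
         linear_combination b2.eval y * h1 + b1.eval y * h2⟩
  neg_mem' := by
    rintro x ⟨a,b,ha,hb,hby,h⟩
    exact ⟨-a, b, neg_mem ha, hb, hby, by rw [eval_neg]; linear_combination -h⟩
  mul_mem' := by
    rintro x1 x2 ⟨a1,b1,ha1,hb1,hb1y,h1⟩ ⟨a2,b2,ha2,hb2,hb2y,h2⟩
    exact ⟨a1*a2, b1*b2, mul_mem ha1 ha2, mul_mem hb1 hb2,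
      by rw [eval_mul]; exact mul_ne_zero hb1y hb2y,
      by simp only [eval_mul]
         linear_combination x2 * b2.eval y * h1 + a1.eval y * h2⟩
  inv_mem' := by
    rintro x ⟨a,b,ha,hb,hby,h⟩
    by_cases hx : x = 0
    · exact ⟨0, 1, zero_mem _, one_mem _, by simp, by simp [hx]⟩
    · have hay : a.eval y ≠ 0 := by
        rw [← h]; exact mul_ne_zero hx hby
      refine ⟨b, a, hb, ha, hay, ?_⟩
      field_simp
      linear_combination -h

lemma L_le_Fsub (L : Subfield E) (y : E) : L ≤ Fsub L y := by
  intro x hx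
  exact ⟨C x, 1, CL_C hx, one_mem _, by simp, by simp⟩

lemma y_mem_Fsub (L : Subfield E) (y : E) : y ∈ Fsub L y :=
  ⟨X, 1, CL_X, one_mem _, by simp, by simp⟩

lemma Fsub_dclosed (d : E → E) (hdadd : ∀ a b, d (a + b) = d a + d b)
    (hdmul : ∀ a b, d (a * b) = d a * b + a * d b)
    (L : Subfield E) (hL : ∀ x ∈ L, d x ∈ L) (y : E)
    (nn1 mm : E[X]) (hnn1 : nn1 ∈ CL L) (hmm : mm ∈ CL L)
    (hmy : mm.eval y ≠ 0) (hdy : d y * mm.eval y = y * nn1.eval y) :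
    ∀ x ∈ Fsub L y, d x ∈ Fsub L y := by
  rintro x ⟨a,b,ha,hb,hby,h⟩
  have hdy' : d y * mm.eval y = (X * nn1 : E[X]).eval y := by
    rw [eval_mul, eval_X]; exact hdy
  have hnn : (X * nn1 : E[X]) ∈ CL L := mul_mem CL_X hnn1
  refine ⟨dnum d (X * nn1) mm a b, dden mm b, CL_dnum d hdadd hL hnn hmm ha hb,
    CL_dden hmm hb, ?_, dRep d hdadd hdmul hdy' a b x h⟩
  unfold dden
  rw [eval_mul, eval_pow]
  exact mul_ne_zero (pow_ne_zero _ hby) hmy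

end RosAux


open RosAux Polynomial

/-- Let `K = s 0 ⊆ s 1 ⊆ … ⊆ s m = E` be an admissible extension of differential fields:
each step adjoins (i.e. is differentially generated by) a special transcendental element.
If a Rosenlicht type equation `T(u, u', …) = 0` over `K` (the degree-`N` homogeneous part of
`T` equals `u^N`, variable `i` of the differential polynomial `T` standing for `u⁽ⁱ⁾`) has a
solution in `E`, then it has a solution in `K`. -/
theorem rosenlicht_descends_admissible_extension
    {E : Type*} [Field E] [CharZero E] (d : E → E)
    (hdadd : ∀ a b, d (a + b) = d a + d b)
    (hdmul : ∀ a b, d (a * b) = d a * b + a * d b)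
    (m : ℕ) (s : ℕ → Subfield E)
    (htop : s m = ⊤)
    (hclosed : ∀ i ≤ m, ∀ x ∈ s i, d x ∈ s i)
    (hmono : ∀ i < m, s i ≤ s (i + 1))
    -- each step adjoins a special transcendental element
    (hstep : ∀ i < m, ∃ y : E, y ∈ s (i + 1) ∧
      Transcendental (s i) y ∧
      (∃ 𝓡 : RatFunc (s i), Polynomial.X ∣ 𝓡.num ∧
        d y = Polynomial.aeval y 𝓡.num / Polynomial.aeval y 𝓡.denom) ∧
      (∀ M : Subfield E, (∀ x ∈ M, d x ∈ M) → s i ≤ M → y ∈ M → s (i + 1) ≤ M))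
    -- a Rosenlicht type polynomial of degree `N` over `K = s 0`
    (N : ℕ) (T : MvPolynomial ℕ (s 0))
    (hdeg : T.totalDegree ≤ N)
    (hhom : MvPolynomial.homogeneousComponent N T = MvPolynomial.X 0 ^ N)
    -- a solution in `E`
    (hsol : ∃ u : E, MvPolynomial.aeval (fun i => d^[i] u) T = 0) :
    -- yields a solution in `K`
    ∃ u : E, u ∈ s 0 ∧ MvPolynomial.aeval (fun i => d^[i] u) T = 0 := by
  obtain ⟨u0, hu0⟩ := hsol
  by_cases hN : N = 0
  · -- degenerate : T = 1, no solution at all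
    exfalso
    subst hN
    have h1 : T.totalDegree = 0 := Nat.le_zero.mp hdeg
    have hT : T = 1 := by
      have hs := MvPolynomial.sum_homogeneousComponent T
      rw [h1, Finset.sum_range_one, hhom, pow_zero] at hs
      exact hs.symm
    rw [hT] at hu0
    simp at hu0
  have hmono0 : ∀ i, i ≤ m → s 0 ≤ s i := by
    intro i
    induction i with
    | zero => intro _; exact le_rfl
    | succ i ih =>
      intro h
      exact le_trans (ih (by omega)) (hmono i (by omega))
  have key : ∀ j, j ≤ m →
      ∃ u : E, u ∈ s (m - j) ∧ MvPolynomial.aeval (fun i => d^[i] u) T = 0 := by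
    intro j
    induction j with
    | zero =>
      intro _
      refine ⟨u0, ?_, hu0⟩
      rw [Nat.sub_zero, htop]
      trivial
    | succ j ih =>
      intro hjm
      obtain ⟨u, hu, husol⟩ := ih (by omega)
      set i := m - (j+1) with hidef
      have him : i < m := by omega
      have hi1 : i + 1 = m - j := by omega
      obtain ⟨y, hyi1, hy, ⟨𝓡, hXdvd, hdy⟩, hmin⟩ := hstep i him
      have hLc : ∀ x ∈ s i, d x ∈ s i := hclosed i (le_of_lt him)
      obtain ⟨n1, hn1⟩ := hXdvd
      set nn1 : E[X] := n1.map (algebraMap ↥(s i) E) with hnn1def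
      set mm : E[X] := 𝓡.denom.map (algebraMap ↥(s i) E) with hmmdef
      have hCLnn1 : nn1 ∈ CL (s i) := by
        intro idx
        rw [hnn1def, coeff_map]
        exact SetLike.coe_mem _
      have hCLmm : mm ∈ CL (s i) := by
        intro idx
        rw [hmmdef, coeff_map]
        exact SetLike.coe_mem _
      have hdenevaly : Polynomial.aeval y 𝓡.denom ≠ 0 := by
        intro h
        exact hy ⟨𝓡.denom, RatFunc.denom_ne_zero 𝓡, h⟩
      have hmmy : mm.eval y ≠ 0 := by
        rw [hmmdef, Polynomial.eval_map, ← Polynomial.aeval_def]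
        exact hdenevaly
      have hm0 : mm.eval 0 ≠ 0 := by
        rw [hmmdef, Polynomial.eval_zero_map]
        obtain ⟨pp, qq, hpq⟩ := RatFunc.isCoprime_num_denom 𝓡
        have hev := congrArg (Polynomial.eval 0) hpq
        rw [Polynomial.eval_add, Polynomial.eval_mul, Polynomial.eval_mul,
          Polynomial.eval_one, hn1, Polynomial.eval_mul, Polynomial.eval_X] at hev
        intro h
        have hz : 𝓡.denom.eval 0 = 0 :=
          (algebraMap ↥(s i) E).injective (by rw [h, map_zero])
        rw [hz, mul_zero, zero_mul, mul_zero, add_zero] at hev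
        exact zero_ne_one hev
      have hnumy : Polynomial.aeval y 𝓡.num = y * nn1.eval y := by
        rw [hn1, map_mul, Polynomial.aeval_X, hnn1def, Polynomial.eval_map,
          ← Polynomial.aeval_def]
      have hdyE : d y * mm.eval y = y * nn1.eval y := by
        rw [hmmdef, Polynomial.eval_map, ← Polynomial.aeval_def, hdy,
          div_mul_cancel₀ _ hdenevaly]
        exact hnumy
      have hFd := Fsub_dclosed d hdadd hdmul (s i) hLc y nn1 mm hCLnn1 hCLmm hmmy hdyE
      have hsub : s (i+1) ≤ Fsub (s i) y :=
        hmin (Fsub (s i) y) hFd (L_le_Fsub (s i) y) (y_mem_Fsub (s i) y)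
      have huF : u ∈ Fsub (s i) y := hsub (by rw [hi1]; exact hu)
      obtain ⟨a0, b0, ha0, hb0, hb0y, hrep⟩ := huF
      obtain ⟨v, hv, hvsol⟩ := step d hdadd hdmul (s i) hLc y hy nn1 mm hCLnn1 hCLmm
        hm0 hdyE (s 0) (hmono0 i (le_of_lt him)) N hN T hdeg hhom u a0 b0 ha0 hb0
        hb0y hrep husol
      exact ⟨v, hv, hvsol⟩
  obtain ⟨u, hu, h⟩ := key m le_rfl
  rw [Nat.sub_self] at hu
  exact ⟨u, hu, h⟩
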